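/- The rational function τ₁ = (X₁+X₂)(X₂+X₃)/(X₂(X₁+X₂+X₃)) in three variables is annihilated by the first-order differential operator D = X₁(X₁+2X₂+2X₃)∂/∂X₁ + X₂(X₂+2X₃)∂/∂X₂ + X₃²∂/∂X₃, i.e. D(τ₁) = 0 as a rational function identity. -/

import Mathlib

/-- The lattice `W₂` generator `τ₁ = (X₁+X₂)(X₂+X₃)/(X₂(X₁+X₂+X₃))`. -/
noncomputable def tau (a b c : ℝ) : ℝ := (a + b) * (b + c) / (b * (a + b + c))

/-- `τ₁` is annihilated by
`D = X₁(X₁+2X₂+2X₃)∂/∂X₁ + X₂(X₂+2X₃)∂/∂X₂ + X₃²∂/∂X₃`. -/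
theorem stmt_0 (X1 X2 X3 : ℝ) (hb : X2 ≠ 0) (hs : X1 + X2 + X3 ≠ 0) :
    X1 * (X1 + 2 * X2 + 2 * X3) * deriv (fun t => tau t X2 X3) X1
      + X2 * (X2 + 2 * X3) * deriv (fun t => tau X1 t X3) X2
      + X3 ^ 2 * deriv (fun t => tau X1 X2 t) X3 = 0 := by
  have hd : X2 * (X1 + X2 + X3) ≠ 0 := mul_ne_zero hb hs
  have h1 : HasDerivAt (fun t => tau t X2 X3)
      (((X2 + X3) * (X2 * (X1 + X2 + X3)) - (X1 + X2) * (X2 + X3) * X2)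
        / (X2 * (X1 + X2 + X3)) ^ 2) X1 := by
    have hn : HasDerivAt (fun t : ℝ => (t + X2) * (X2 + X3)) (X2 + X3) X1 := by
      simpa using ((hasDerivAt_id X1).add_const X2).mul_const (X2 + X3)
    have hden : HasDerivAt (fun t : ℝ => X2 * (t + X2 + X3)) X2 X1 := by
      simpa using (((hasDerivAt_id X1).add_const X2).add_const X3).const_mul X2
    simpa [tau, Pi.div_def] using hn.div hden hd
  have h2 : HasDerivAt (fun t => tau X1 t X3)
      (((X1 + 2 * X2 + X3) * (X2 * (X1 + X2 + X3)) -
        (X1 + X2) * (X2 + X3) * (X1 + 2 * X2 + X3)) / (X2 * (X1 + X2 + X3)) ^ 2) X2 := by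
    have hn : HasDerivAt (fun t : ℝ => (X1 + t) * (t + X3)) (X1 + 2 * X2 + X3) X2 := by
      have := ((hasDerivAt_id X2).const_add X1).mul ((hasDerivAt_id X2).add_const X3)
      simp only [id_eq, Pi.mul_def] at this; exact this.congr_deriv (by ring)
    have hden : HasDerivAt (fun t : ℝ => t * (X1 + t + X3)) (X1 + 2 * X2 + X3) X2 := by
      have := (hasDerivAt_id X2).mul (((hasDerivAt_id X2).const_add X1).add_const X3)
      simp only [id_eq, Pi.mul_def] at this; exact this.congr_deriv (by ring)
    simpa [tau, Pi.div_def] using hn.div hden hd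
  have h3 : HasDerivAt (fun t => tau X1 X2 t)
      (((X1 + X2) * (X2 * (X1 + X2 + X3)) - (X1 + X2) * (X2 + X3) * X2)
        / (X2 * (X1 + X2 + X3)) ^ 2) X3 := by
    have hn : HasDerivAt (fun t : ℝ => (X1 + X2) * (X2 + t)) (X1 + X2) X3 := by
      simpa using ((hasDerivAt_id X3).const_add X2).const_mul (X1 + X2)
    have hden : HasDerivAt (fun t : ℝ => X2 * (X1 + X2 + t)) X2 X3 := by
      simpa using ((hasDerivAt_id X3).const_add (X1 + X2)).const_mul X2
    simpa [tau, add_assoc, Pi.div_def] using hn.div hden hd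
  rw [h1.deriv, h2.deriv, h3.deriv]
  field_simp
  ring
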